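/- Uniqueness of proper rays in Euclidean space up to proper homotopy (instance of Lemma 4.5(a) for the simply connected end of ℝ^n): Let n ≥ 2. Then any two proper continuous maps γ₀, γ₁ : [0,∞) → ℝ^n are properly homotopic, i.e., there exists a continuous proper map H : [0,1] × [0,∞) → ℝ^n with H(0,t) = γ₀(t) and H(1,t) = γ₁(t) for all t. -/

import Mathlib

open Set Metric
set_option linter.unusedSectionVars false

variable {E : Type*} [NormedAddCommGroup E] [NormedSpace ℝ E]

/-- A "controlled homotopy" between two curves `ℝ → E`: continuous, with the
prescribed endpoints, and with norm blowing up uniformly (in `s ∈ [0,1]`) as `t → ∞`. -/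
def OkHtpy (f g : ℝ → E) (H : ℝ × ℝ → E) : Prop :=
  Continuous H ∧ (∀ t, H (0, t) = f t) ∧ (∀ t, H (1, t) = g t) ∧
  ∀ R : ℝ, ∃ T : ℝ, 0 ≤ T ∧ ∀ s t : ℝ, 0 ≤ s → s ≤ 1 → T ≤ t → R ≤ ‖H (s, t)‖

lemma okHtpy_symm {f g : ℝ → E} {H : ℝ × ℝ → E} (h : OkHtpy f g H) :
    OkHtpy g f (fun p => H (1 - p.1, p.2)) := by
  obtain ⟨hc, h0, h1, hb⟩ := h
  refine ⟨hc.comp (by fun_prop), by simpa using h1, by simpa using h0, fun R => ?_⟩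
  obtain ⟨T, hT, hTb⟩ := hb R
  exact ⟨T, hT, fun s t hs hs1 ht => hTb (1 - s) t (by linarith) (by linarith) ht⟩

lemma okHtpy_trans {f g h : ℝ → E} {H₁ H₂ : ℝ × ℝ → E}
    (h₁ : OkHtpy f g H₁) (h₂ : OkHtpy g h H₂) :
    OkHtpy f h (fun p => if p.1 ≤ 1/2 then H₁ (2*p.1, p.2) else H₂ (2*p.1 - 1, p.2)) := by
  obtain ⟨hc₁, h10, h11, hb₁⟩ := h₁
  obtain ⟨hc₂, h20, h21, hb₂⟩ := h₂
  refine ⟨?_, ?_, ?_, ?_⟩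
  · apply Continuous.if_le (hc₁.comp (by fun_prop)) (hc₂.comp (by fun_prop))
      (by fun_prop) (by fun_prop)
    intro p hp
    simp only [Function.comp]
    rw [show (2 : ℝ) * p.1 - 1 = 0 by rw [hp]; norm_num,
        show (2 : ℝ) * p.1 = 1 by rw [hp]; norm_num, h11, h20]
  · intro t
    simp only [if_pos (by norm_num : (0:ℝ) ≤ 1/2)]
    rw [show (2:ℝ) * 0 = 0 by norm_num, h10]
  · intro t
    simp only [if_neg (by norm_num : ¬ (1:ℝ) ≤ 1/2)]
    rw [show (2:ℝ) * 1 - 1 = 1 by norm_num, h21]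
  · intro R
    obtain ⟨T₁, hT₁, hb₁⟩ := hb₁ R
    obtain ⟨T₂, hT₂, hb₂⟩ := hb₂ R
    refine ⟨max T₁ T₂, le_max_of_le_left hT₁, fun s t hs hs1 ht => ?_⟩
    show R ≤ ‖if s ≤ 1/2 then H₁ (2*s, t) else H₂ (2*s - 1, t)‖
    by_cases hhalf : s ≤ 1/2
    · rw [if_pos hhalf]
      exact hb₁ (2*s) t (by linarith) (by linarith) (le_trans (le_max_left _ _) ht)
    · rw [if_neg hhalf]
      push_neg at hhalf
      exact hb₂ (2*s - 1) t (by linarith) (by linarith) (le_trans (le_max_right _ _) ht)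


lemma okHtpy_isProperMap [ProperSpace E] {f g : ℝ → E} {H : ℝ × ℝ → E}
    (h : OkHtpy f g H) :
    IsProperMap (fun p : Icc (0:ℝ) 1 × Ici (0:ℝ) => H (p.1.1, p.2.1)) := by
  obtain ⟨hc, -, -, hb⟩ := h
  have hcont : Continuous fun p : Icc (0:ℝ) 1 × Ici (0:ℝ) => H (p.1.1, p.2.1) :=
    hc.comp (by fun_prop)
  rw [isProperMap_iff_isCompact_preimage]
  refine ⟨hcont, fun K hK => ?_⟩
  obtain ⟨R, hR⟩ := hK.isBounded.subset_closedBall 0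
  obtain ⟨T, hT0, hTb⟩ := hb (R + 1)
  have hsub : (fun p : Icc (0:ℝ) 1 × Ici (0:ℝ) => H (p.1.1, p.2.1)) ⁻¹' K ⊆
      (univ : Set (Icc (0:ℝ) 1)) ×ˢ {t : Ici (0:ℝ) | t.1 ≤ T} := by
    rintro ⟨s, t⟩ hp
    refine ⟨trivial, ?_⟩
    simp only [mem_setOf_eq]
    by_contra hlt2
    push_neg at hlt2
    have h1 := hTb s.1 t.1 s.2.1 s.2.2 hlt2.le
    have hmem : H (s.1, t.1) ∈ closedBall (0:E) R := hR hp
    rw [mem_closedBall_zero_iff] at hmem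
    linarith
  have hDcomp : IsCompact {t : Ici (0:ℝ) | t.1 ≤ T} := by
    rw [Subtype.isCompact_iff]
    have himg : (↑) '' {t : Ici (0:ℝ) | t.1 ≤ T} = Icc (0:ℝ) T := by
      ext x
      constructor
      · rintro ⟨⟨y, hy⟩, hyT, rfl⟩; exact ⟨hy, hyT⟩
      · rintro ⟨hx0, hxT⟩; exact ⟨⟨x, hx0⟩, hxT, rfl⟩
    rw [himg]; exact isCompact_Icc
  have hUcomp : IsCompact (univ : Set (Icc (0:ℝ) 1)) :=
    isCompact_iff_isCompact_univ.mp isCompact_Icc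
  exact (hUcomp.prod hDcomp).of_isClosed_subset (hK.isClosed.preimage hcont) hsub

lemma proper_ray_escape [ProperSpace E] (γ : Ici (0:ℝ) → E) (h : IsProperMap γ) (R : ℝ) :
    ∃ T, 0 ≤ T ∧ ∀ t : ℝ, T ≤ t → R ≤ ‖γ ⟨max t 0, le_max_right t 0⟩‖ := by
  have hK : IsCompact (γ ⁻¹' closedBall 0 R) := h.isCompact_preimage (isCompact_closedBall 0 R)
  have himg : IsCompact ((↑) '' (γ ⁻¹' closedBall 0 R) : Set ℝ) :=
    hK.image continuous_subtype_val
  obtain ⟨C, hC⟩ := himg.bddAbove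
  refine ⟨max (C + 1) 0, le_max_right _ _, fun t ht => ?_⟩
  by_contra hlt
  push_neg at hlt
  have h0t : (0:ℝ) ≤ t := le_trans (le_max_right _ _) ht
  have hmem : γ ⟨max t 0, le_max_right t 0⟩ ∈ closedBall (0:E) R := by
    rw [mem_closedBall_zero_iff]; exact hlt.le
  have h1 : max t 0 ≤ C := hC ⟨⟨max t 0, le_max_right t 0⟩, hmem, rfl⟩
  have h2 : t ≤ C := by rwa [max_eq_left h0t] at h1
  have h3 : C + 1 ≤ t := le_trans (le_max_left _ _) ht
  linarith
lemma straighten (hrank : 1 < Module.rank ℝ E) (y : E) (hy : y ≠ 0)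
    (γ' : ℝ → E) (hcont : Continuous γ')
    (hfac : ∀ t : ℝ, γ' t = γ' (max t 0))
    (hprop : ∀ R : ℝ, ∃ T, 0 ≤ T ∧ ∀ t : ℝ, T ≤ t → R ≤ ‖γ' t‖) :
    ∃ H : ℝ × ℝ → E, OkHtpy γ' (fun t => (1 + max t 0) • y) H := by
  obtain ⟨A, hA0, hA⟩ := hprop 1
  set Δ : ℝ → E := fun u => γ' (max u A) with hΔdef
  have hΔc : Continuous Δ := hcont.comp (continuous_id.max continuous_const)
  have hΔ1 : ∀ u, 1 ≤ ‖Δ u‖ := fun u => hA _ (le_max_right u A)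
  have hΔne : ∀ u, ‖Δ u‖ ≠ 0 := fun u => (lt_of_lt_of_le zero_lt_one (hΔ1 u)).ne'
  -- generic blowup helper: for t ≥ max T 0, ‖Δ (max t 0)‖ ≥ R
  have hblow : ∀ R : ℝ, ∃ T, 0 ≤ T ∧ ∀ t : ℝ, T ≤ t → R ≤ ‖Δ (max t 0)‖ := by
    intro R
    obtain ⟨T, hT0, hT⟩ := hprop R
    refine ⟨T, hT0, fun t ht => hT _ ?_⟩
    exact le_trans ht (le_trans (le_max_left t 0) (le_max_left _ A))
  ----------------------------------------------------------------
  -- Stage 1 : drag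
  ----------------------------------------------------------------
  have ok₁ : OkHtpy γ' (fun t => Δ (max t 0))
      (fun p => γ' (max (max p.2 0) (p.1 * A))) := by
    refine ⟨hcont.comp (by fun_prop), ?_, ?_, ?_⟩
    · intro t
      simp only [zero_mul, max_eq_left (le_max_right t 0)]
      exact (hfac t).symm
    · intro t
      simp only [one_mul]
      rfl
    · intro R
      obtain ⟨T, hT0, hT⟩ := hprop R
      refine ⟨T, hT0, fun s t hs hs1 ht => hT _ ?_⟩
      exact le_trans ht (le_trans (le_max_left t 0) (le_max_left _ _))
  ----------------------------------------------------------------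
  -- Stage 2 : freeze direction
  ----------------------------------------------------------------
  have ok₂ : OkHtpy (fun t => Δ (max t 0))
      (fun t => (‖Δ (max t 0)‖ / ‖Δ 0‖) • Δ 0)
      (fun p => (‖Δ (max p.2 0)‖ / ‖Δ ((1 - p.1) * max p.2 0)‖) •
        Δ ((1 - p.1) * max p.2 0)) := by
    have hnorm : ∀ s t : ℝ,
        ‖(‖Δ (max t 0)‖ / ‖Δ ((1 - s) * max t 0)‖) • Δ ((1 - s) * max t 0)‖
          = ‖Δ (max t 0)‖ := by
      intro s t
      rw [norm_smul, Real.norm_eq_abs, abs_of_nonneg (by positivity),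
        div_mul_cancel₀ _ (hΔne _)]
    refine ⟨?_, ?_, ?_, ?_⟩
    · exact ((continuous_norm.comp (hΔc.comp (by fun_prop))).div
        (continuous_norm.comp (hΔc.comp (by fun_prop))) (fun p => hΔne _)).smul
        (hΔc.comp (by fun_prop))
    · intro t
      simp only [sub_zero, one_mul, div_self (hΔne (max t 0)), one_smul]
    · intro t
      simp only [sub_self, zero_mul]
    · intro R
      obtain ⟨T, hT0, hT⟩ := hblow R
      exact ⟨T, hT0, fun s t hs hs1 ht => by rw [hnorm s t]; exact hT t ht⟩
  ----------------------------------------------------------------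
  -- Stage 3 : straighten radius
  ----------------------------------------------------------------
  have ok₃ : OkHtpy (fun t => (‖Δ (max t 0)‖ / ‖Δ 0‖) • Δ 0)
      (fun t => ((1 + max t 0) / ‖Δ 0‖) • Δ 0)
      (fun p => (((1 - p.1) * ‖Δ (max p.2 0)‖ + p.1 * (1 + max p.2 0)) / ‖Δ 0‖) •
        Δ 0) := by
    refine ⟨?_, ?_, ?_, ?_⟩
    · exact (Continuous.div (by fun_prop) continuous_const (fun _ => hΔne 0)).smul
        continuous_const
    · intro t
      simp only [sub_zero, one_mul, zero_mul, add_zero]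
    · intro t
      simp only [sub_self, zero_mul, one_mul, zero_add]
    · intro R
      obtain ⟨T, hT0, hT⟩ := hblow R
      refine ⟨max T (max R 0), le_max_of_le_left hT0, fun s t hs hs1 ht => ?_⟩
      have ht0 : (0:ℝ) ≤ t := le_trans (le_max_of_le_right (le_max_right _ _)) ht
      have htR : R ≤ t := le_trans (le_max_of_le_right (le_max_left _ _)) ht
      have ha : R ≤ ‖Δ (max t 0)‖ := hT t (le_trans (le_max_left _ _) ht)
      have hb' : R ≤ 1 + max t 0 := by
        rw [max_eq_left ht0]; linarith
      have hc0 : (0:ℝ) ≤ (1 - s) * ‖Δ (max t 0)‖ + s * (1 + max t 0) := by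
        have := norm_nonneg (Δ (max t 0))
        have h1 : (0:ℝ) ≤ 1 + max t 0 := by positivity
        nlinarith
      rw [norm_smul, Real.norm_eq_abs, abs_of_nonneg (by positivity),
        div_mul_cancel₀ _ (hΔne 0)]
      nlinarith [mul_le_mul_of_nonneg_left ha (by linarith : (0:ℝ) ≤ 1 - s),
        mul_le_mul_of_nonneg_left hb' hs]
  ----------------------------------------------------------------
  -- Stage 4 : rotate to y
  ----------------------------------------------------------------
  have hΔ0ne : Δ 0 ≠ 0 := norm_ne_zero_iff.mp (hΔne 0)
  have hx : (‖Δ 0‖)⁻¹ • Δ 0 ≠ 0 := smul_ne_zero (inv_ne_zero (hΔne 0)) hΔ0ne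
  have hpc : IsPathConnected ({0}ᶜ : Set E) :=
    isPathConnected_compl_singleton_of_one_lt_rank hrank 0
  obtain ⟨q, hq⟩ := hpc.joinedIn _ hx y hy
  set Q : ℝ → E := ⇑q.extend with hQdef
  have hQc : Continuous Q := q.continuous_extend
  have hQne : ∀ c : ℝ, Q c ≠ 0 := fun c => hq (projIcc 0 1 zero_le_one c)
  obtain ⟨c₀, hc₀mem, hc₀min⟩ :=
    isCompact_Icc.exists_isMinOn (⟨0, by norm_num⟩ : (Icc (0:ℝ) 1).Nonempty)
      ((continuous_norm.comp hQc).continuousOn)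
  have hm : 0 < ‖Q c₀‖ := norm_pos_iff.mpr (hQne c₀)
  have ok₄ : OkHtpy (fun t => ((1 + max t 0) / ‖Δ 0‖) • Δ 0)
      (fun t => (1 + max t 0) • y)
      (fun p => (1 + max p.2 0) • Q p.1) := by
    refine ⟨by fun_prop, ?_, ?_, ?_⟩
    · intro t
      show (1 + max t 0) • Q 0 = ((1 + max t 0) / ‖Δ 0‖) • Δ 0
      rw [show Q 0 = (‖Δ 0‖)⁻¹ • Δ 0 from q.extend_zero, smul_smul, div_eq_mul_inv]
    · intro t
      show (1 + max t 0) • Q 1 = (1 + max t 0) • y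
      rw [show Q 1 = y from q.extend_one]
    · intro R
      refine ⟨max (R / ‖Q c₀‖) 0, le_max_right _ _, fun s t hs hs1 ht => ?_⟩
      have ht0 : (0:ℝ) ≤ t := le_trans (le_max_right _ _) ht
      have htR : R / ‖Q c₀‖ ≤ t := le_trans (le_max_left _ _) ht
      have hQs : ‖Q c₀‖ ≤ ‖Q s‖ := hc₀min ⟨hs, hs1⟩
      rw [norm_smul, Real.norm_eq_abs, max_eq_left ht0,
        abs_of_nonneg (by linarith : (0:ℝ) ≤ 1 + t)]
      have h1 : R ≤ t * ‖Q c₀‖ := by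
        rw [div_le_iff₀ hm] at htR
        linarith
      nlinarith
  exact ⟨_, okHtpy_trans ok₁ (okHtpy_trans ok₂ (okHtpy_trans ok₃ ok₄))⟩

/-- Any two proper rays in `ℝⁿ` (`n ≥ 2`) are properly homotopic. -/
theorem proper_rays_properly_homotopic
    (n : ℕ) (hn : 2 ≤ n)
    (γ₀ γ₁ : Set.Ici (0 : ℝ) → EuclideanSpace ℝ (Fin n))
    (h₀ : IsProperMap γ₀) (h₁ : IsProperMap γ₁) :
    ∃ Hmap : Set.Icc (0 : ℝ) 1 × Set.Ici (0 : ℝ) → EuclideanSpace ℝ (Fin n),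
      IsProperMap Hmap ∧
      (∀ t, Hmap (⟨0, by norm_num⟩, t) = γ₀ t) ∧
      (∀ t, Hmap (⟨1, by norm_num⟩, t) = γ₁ t) := by
  have hrank : 1 < Module.rank ℝ (EuclideanSpace ℝ (Fin n)) := by
    rw [← Module.finrank_eq_rank]
    have : Module.finrank ℝ (EuclideanSpace ℝ (Fin n)) = n := finrank_euclideanSpace_fin
    rw [this]
    exact_mod_cast lt_of_lt_of_le one_lt_two hn
  have hFin : (0 : ℕ) < n := by omega
  set y : EuclideanSpace ℝ (Fin n) := EuclideanSpace.single (⟨0, hFin⟩ : Fin n) (1 : ℝ) with hydef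
  have hy : y ≠ 0 := by
    intro h
    have hnorm := congrArg norm h
    rw [EuclideanSpace.norm_single] at hnorm
    simp at hnorm
  -- extended curves
  set γ₀' : ℝ → EuclideanSpace ℝ (Fin n) := fun t => γ₀ ⟨max t 0, le_max_right t 0⟩ with hγ₀'
  set γ₁' : ℝ → EuclideanSpace ℝ (Fin n) := fun t => γ₁ ⟨max t 0, le_max_right t 0⟩ with hγ₁'
  have hmaxmax : ∀ t : ℝ, max (max t 0) 0 = max t 0 := fun t =>
    max_eq_left (le_max_right t 0)
  have hcont₀ : Continuous γ₀' :=
    h₀.continuous.comp (Continuous.subtype_mk (continuous_id.max continuous_const) _)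
  have hcont₁ : Continuous γ₁' :=
    h₁.continuous.comp (Continuous.subtype_mk (continuous_id.max continuous_const) _)
  have hfac₀ : ∀ t : ℝ, γ₀' t = γ₀' (max t 0) := by
    intro t; simp only [hγ₀', hmaxmax]
  have hfac₁ : ∀ t : ℝ, γ₁' t = γ₁' (max t 0) := by
    intro t; simp only [hγ₁', hmaxmax]
  have hprop₀ : ∀ R : ℝ, ∃ T, 0 ≤ T ∧ ∀ t : ℝ, T ≤ t → R ≤ ‖γ₀' t‖ :=
    fun R => proper_ray_escape γ₀ h₀ R
  have hprop₁ : ∀ R : ℝ, ∃ T, 0 ≤ T ∧ ∀ t : ℝ, T ≤ t → R ≤ ‖γ₁' t‖ :=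
    fun R => proper_ray_escape γ₁ h₁ R
  obtain ⟨G₀, okG₀⟩ := straighten hrank y hy γ₀' hcont₀ hfac₀ hprop₀
  obtain ⟨G₁, okG₁⟩ := straighten hrank y hy γ₁' hcont₁ hfac₁ hprop₁
  have okH := okHtpy_trans okG₀ (okHtpy_symm okG₁)
  refine ⟨fun p => (if p.1.1 ≤ 1/2 then G₀ (2 * p.1.1, p.2.1)
      else G₁ (1 - (2 * p.1.1 - 1), p.2.1)), ?_, ?_, ?_⟩
  · exact okHtpy_isProperMap okH
  · intro t
    exact (okH.2.1 t.1).trans (congrArg γ₀ (Subtype.ext (max_eq_left t.2)))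
  · intro t
    exact (okH.2.2.1 t.1).trans (congrArg γ₁ (Subtype.ext (max_eq_left t.2)))
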